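/- Let z ∈ ℝ with z > 1 and let W ∈ (0, 2π). There exists a constant M > 0 (depending only on z and W) such that for every real a > 1 and every w ∈ ℂ with Re w > −W and |Im w| < W, one has |f(z,w,a)| ≤ M a ( e^{Re w} + z^{1−a} e^{(a−1) Re w} ). -/

import Mathlib

open scoped BigOperators

/-- `f(z,w,a) = (1 - (z e^{-w})^{1-a})/(1 - z e^{-w})`, with the removable singularity
(where `z e^{-w} = 1`) filled by the limiting value `1 - a`.  Principal powers. -/
noncomputable def lerchF (z a w : ℂ) : ℂ :=
  if z * Complex.exp (-w) = 1 then 1 - a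
  else (1 - (z * Complex.exp (-w)) ^ ((1 : ℂ) - a)) / (1 - z * Complex.exp (-w))

theorem stmt14 (z : ℝ) (hz : 1 < z) (W : ℝ) (hW0 : 0 < W) (hW : W < 2 * Real.pi) :
    ∃ M : ℝ, 0 < M ∧
      ∀ a : ℝ, 1 < a → ∀ w : ℂ, -W < w.re → |w.im| < W →
        ‖lerchF (z : ℂ) (a : ℂ) w‖
          ≤ M * a * (Real.exp w.re + z ^ (1 - a) * Real.exp ((a - 1) * w.re)) := by
  refine ⟨2 * Real.exp W, by positivity, ?_⟩
  intro a ha w hre _him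
  have hz0 : (0:ℝ) < z := lt_trans one_pos hz
  simp only [lerchF]
  set u : ℂ := (z:ℂ) * Complex.exp (-w) with hu
  have hu0 : u ≠ 0 := mul_ne_zero (by exact_mod_cast hz0.ne') (Complex.exp_ne_zero _)
  have habs : ‖u‖ = z * Real.exp (-w.re) := by
    rw [hu, norm_mul, Complex.norm_exp, Complex.norm_real, Real.norm_eq_abs, abs_of_pos hz0]
    simp
  set T : ℝ := z ^ (1 - a) * Real.exp ((a - 1) * w.re) with hT
  have hT0 : 0 < T := by positivity
  set S : ℝ := Real.exp w.re + T with hS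
  have hS0 : 0 < S := by positivity
  have hsc : (1:ℂ) - (a:ℂ) = ((1 - a : ℝ) : ℂ) := by push_cast; ring
  have hnum : ‖u ^ ((1:ℂ) - (a:ℂ))‖ = T := by
    rw [hsc, Complex.norm_cpow_real, habs,
      Real.mul_rpow hz0.le (Real.exp_pos _).le, ← Real.exp_mul, hT]
    congr 1
    ring
  have hW1 : (1:ℝ) ≤ Real.exp W := Real.one_le_exp hW0.le
  have h1 : (1:ℝ) ≤ Real.exp W * Real.exp w.re := by
    rw [← Real.exp_add]
    exact Real.one_le_exp (by linarith)
  have hTS : 1 + T ≤ Real.exp W * S := by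
    have : T ≤ Real.exp W * T := by nlinarith
    rw [hS]; nlinarith
  have hES : (1:ℝ) ≤ Real.exp W * S := by nlinarith
  split_ifs with h
  · -- u = 1
    have hval : ‖(1:ℂ) - (a:ℂ)‖ = a - 1 := by
      rw [hsc, Complex.norm_real, Real.norm_eq_abs, abs_of_nonpos (by linarith)]
      ring
    rw [hval]
    nlinarith [Real.exp_pos W]
  · have hden0 : (1:ℂ) - u ≠ 0 := sub_ne_zero.mpr (Ne.symm h)
    have hdpos : 0 < ‖(1:ℂ) - u‖ := norm_pos_iff.mpr hden0
    have hnn : ‖(1:ℂ) - u ^ ((1:ℂ) - (a:ℂ))‖ ≤ 1 + T := by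
      calc ‖(1:ℂ) - u ^ ((1:ℂ) - (a:ℂ))‖ ≤ ‖(1:ℂ)‖ + ‖u ^ ((1:ℂ) - (a:ℂ))‖ := norm_sub_le _ _
        _ = 1 + T := by rw [hnum, norm_one]
    rw [norm_div, div_le_iff₀ hdpos]
    rcases le_or_gt (1/2 : ℝ) ‖(1:ℂ) - u‖ with hfar | hnear
    · have hfar' := mul_le_mul_of_nonneg_left hfar
        (by positivity : (0:ℝ) ≤ 2 * Real.exp W * a * S)
      nlinarith [mul_pos (Real.exp_pos W) hS0,
        mul_nonneg (by linarith : (0:ℝ) ≤ a - 1) (mul_pos (Real.exp_pos W) hS0).le]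
    · -- near: |1 - u| < 1/2
      set L := Complex.log u with hL
      have hL0 : L ≠ 0 := by
        intro h0
        apply h
        rw [← Complex.exp_log hu0, ← hL, h0, Complex.exp_zero]
      have hLb : ‖L‖ ≤ (3/2) * ‖(1:ℂ) - u‖ := by
        have h2 : ‖u - 1‖ ≤ 1/2 := by rw [norm_sub_rev]; exact hnear.le
        have h3 := Complex.norm_log_one_add_half_le_self h2
        have e : (1:ℂ) + (u - 1) = u := by ring
        rw [e] at h3
        rw [norm_sub_rev]
        exact h3
      set s : ℂ := (1:ℂ) - (a:ℂ) with hsdef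
      have hs0 : s ≠ 0 := by
        rw [hsc]
        exact Complex.ofReal_ne_zero.mpr (by linarith)
      set c : ℂ := L * s with hcdef
      have hc0 : c ≠ 0 := mul_ne_zero hL0 hs0
      have hexp : Complex.exp c = u ^ s := by
        rw [hcdef, hL]
        exact (Complex.cpow_def_of_ne_zero hu0 s).symm
      have hcre : Real.exp c.re = T := by
        rw [← Complex.norm_exp, hexp, hnum]
      have hint := integral_exp_mul_complex (a := (0:ℝ)) (b := 1) hc0
      simp only [Complex.ofReal_one, Complex.ofReal_zero, mul_one, mul_zero,
        Complex.exp_zero] at hint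
      have hCb : ∀ x ∈ Set.uIoc (0:ℝ) (1:ℝ), ‖Complex.exp (c * x)‖ ≤ 1 + T := by
        intro x hx
        rw [Set.uIoc_of_le (by norm_num : (0:ℝ) ≤ 1)] at hx
        obtain ⟨hx0, hx1⟩ := hx
        rw [Complex.norm_exp]
        have hre2 : (c * (x:ℂ)).re = c.re * x := by simp [Complex.mul_re]
        rw [hre2]
        rcases le_or_gt c.re 0 with h1' | h1'
        · have : c.re * x ≤ 0 := mul_nonpos_of_nonpos_of_nonneg h1' hx0.le
          calc Real.exp (c.re * x) ≤ Real.exp 0 := Real.exp_le_exp.mpr this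
            _ = 1 := Real.exp_zero
            _ ≤ 1 + T := by linarith
        · have : c.re * x ≤ c.re := by nlinarith
          calc Real.exp (c.re * x) ≤ Real.exp c.re := Real.exp_le_exp.mpr this
            _ = T := hcre
            _ ≤ 1 + T := by linarith
      have hIle : ‖∫ x in (0:ℝ)..1, Complex.exp (c * x)‖ ≤ (1 + T) * |(1:ℝ) - 0| :=
        intervalIntegral.norm_integral_le_of_norm_le_const hCb
      rw [sub_zero, abs_one, mul_one] at hIle
      have e3 : (1:ℂ) - u ^ s = -(c * ∫ x in (0:ℝ)..1, Complex.exp (c * x)) := by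
        rw [hint, mul_comm, div_mul_cancel₀ _ hc0, ← hexp]
        ring
      have hnum2 : ‖(1:ℂ) - u ^ s‖ ≤ ‖c‖ * (1 + T) := by
        rw [e3, norm_neg, norm_mul]
        exact mul_le_mul_of_nonneg_left hIle (norm_nonneg _)
      have hsnorm : ‖s‖ = a - 1 := by
        rw [hsc, Complex.norm_real, Real.norm_eq_abs,
          abs_of_nonpos (by linarith)]
        ring
      have hcnorm : ‖c‖ = ‖L‖ * (a - 1) := by
        rw [hcdef, norm_mul, hsnorm]
      calc ‖(1:ℂ) - u ^ s‖ ≤ ‖c‖ * (1 + T) := hnum2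
        _ = (a - 1) * (1 + T) * ‖L‖ := by rw [hcnorm]; ring
        _ ≤ (a - 1) * (1 + T) * ((3/2) * ‖(1:ℂ) - u‖) := by
            apply mul_le_mul_of_nonneg_left hLb (by nlinarith)
        _ ≤ (a - 1) * (Real.exp W * S) * ((3/2) * ‖(1:ℂ) - u‖) := by
            apply mul_le_mul_of_nonneg_right
              (mul_le_mul_of_nonneg_left hTS (by linarith)) (by positivity)
        _ = (3/2 * (a - 1)) * (Real.exp W * S * ‖(1:ℂ) - u‖) := by ring
        _ ≤ (2 * a) * (Real.exp W * S * ‖(1:ℂ) - u‖) := by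
            apply mul_le_mul_of_nonneg_right (by linarith)
            positivity
        _ = 2 * Real.exp W * a * S * ‖(1:ℂ) - u‖ := by ring
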